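/- For all x in (0, π/2), 2·(sin x)/x + (tan x)/x > 2·x/(sin x) + x/(tan x) > 3. -/

import Mathlib

open Real

lemma aux_mono (f f' : ℝ → ℝ) (hder : ∀ y, HasDerivAt f (f' y) y)
    (hpos : ∀ y, 0 ≤ y → 0 ≤ f' y) (hf0 : f 0 = 0) {x : ℝ} (hx : 0 ≤ x) : 0 ≤ f x := by
  have hmono : MonotoneOn f (Set.Ici 0) := by
    apply monotoneOn_of_deriv_nonneg (convex_Ici 0)
      (fun y _ => (hder y).continuousAt.continuousWithinAt)
      (fun y hy => (hder y).differentiableAt.differentiableWithinAt)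
    intro y hy
    rw [(hder y).deriv]
    exact hpos y (le_of_lt (by simpa using hy))
  calc (0:ℝ) = f 0 := hf0.symm
    _ ≤ f x := hmono Set.self_mem_Ici hx hx

lemma sin_ge {x : ℝ} (hx : 0 ≤ x) : x - x^3/6 ≤ Real.sin x := by
  have h := aux_mono (fun t => Real.sin t - (t - t^3/6)) (fun t => Real.cos t - (1 - t^2/2))
    (fun y => by
      have : HasDerivAt (fun t : ℝ => Real.sin t - (t - t^3/6))
          (Real.cos y - (1 - (3:ℕ) * y^2 / 6)) y := by
        exact (Real.hasDerivAt_sin y).sub ((hasDerivAt_id y).sub ((hasDerivAt_pow 3 y).div_const 6))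
      convert this using 1; push_cast; ring)
    (fun y hy => by nlinarith [Real.one_sub_sq_div_two_le_cos (x := y)]) (by norm_num) hx
  linarith [h]

lemma cos_le' {x : ℝ} (hx : 0 ≤ x) : Real.cos x ≤ 1 - x^2/2 + x^4/24 := by
  have h := aux_mono (fun t => 1 - t^2/2 + t^4/24 - Real.cos t)
    (fun t => -(t - t^3/6) + Real.sin t)
    (fun y => by
      have : HasDerivAt (fun t : ℝ => 1 - t^2/2 + t^4/24 - Real.cos t)
          (0 - (2:ℕ)*y^1/2 + (4:ℕ)*y^3/24 - (-Real.sin y)) y := by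
        exact ((((hasDerivAt_const y (1:ℝ)).sub ((hasDerivAt_pow 2 y).div_const 2)).add
          ((hasDerivAt_pow 4 y).div_const 24)).sub (Real.hasDerivAt_cos y))
      convert this using 1; push_cast; ring)
    (fun y hy => by have := sin_ge hy; linarith) (by norm_num) hx
  linarith [h]

lemma sin_le' {x : ℝ} (hx : 0 ≤ x) : Real.sin x ≤ x - x^3/6 + x^5/120 := by
  have h := aux_mono (fun t => t - t^3/6 + t^5/120 - Real.sin t)
    (fun t => 1 - t^2/2 + t^4/24 - Real.cos t)
    (fun y => by
      have : HasDerivAt (fun t : ℝ => t - t^3/6 + t^5/120 - Real.sin t)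
          (1 - (3:ℕ)*y^2/6 + (5:ℕ)*y^4/120 - Real.cos y) y := by
        exact (((hasDerivAt_id y).sub ((hasDerivAt_pow 3 y).div_const 6)).add
          ((hasDerivAt_pow 5 y).div_const 120)).sub (Real.hasDerivAt_sin y)
      convert this using 1; push_cast; ring)
    (fun y hy => by have := cos_le' hy; linarith) (by norm_num) hx
  linarith [h]

lemma cos_ge' {x : ℝ} (hx : 0 ≤ x) : 1 - x^2/2 + x^4/24 - x^6/720 ≤ Real.cos x := by
  have h := aux_mono (fun t => Real.cos t - (1 - t^2/2 + t^4/24 - t^6/720))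
    (fun t => (t - t^3/6 + t^5/120) - Real.sin t)
    (fun y => by
      have : HasDerivAt (fun t : ℝ => Real.cos t - (1 - t^2/2 + t^4/24 - t^6/720))
          (-Real.sin y - (0 - (2:ℕ)*y^1/2 + (4:ℕ)*y^3/24 - (6:ℕ)*y^5/720)) y := by
        exact (Real.hasDerivAt_cos y).sub ((((hasDerivAt_const y (1:ℝ)).sub
          ((hasDerivAt_pow 2 y).div_const 2)).add ((hasDerivAt_pow 4 y).div_const 24)).sub
          ((hasDerivAt_pow 6 y).div_const 720))
      convert this using 1; push_cast; ring)
    (fun y hy => by have := sin_le' hy; linarith) (by norm_num) hx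
  linarith [h]
lemma poly_q {x : ℝ} (h0 : 0 < x) (h1 : x < 1.58) :
    x^2 * ((1-x^2/2+x^4/24) * (2 + (1-x^2/2+x^4/24)))
      < (x - x^3/6)^2 * (2*(1-x^2/2+x^4/24-x^6/720)+1) := by
  have hq : 0 < 1/12 - x^2/60 + 13*(x^2)^2/8640 - (x^2)^3/12960 := by
    nlinarith [sq_nonneg (x^2-6), sq_nonneg (x^2-7),
      mul_nonneg (sq_nonneg (x^2)) (by nlinarith : (0:ℝ) ≤ 2.5 - x^2)]
  nlinarith [mul_pos (pow_pos h0 6) hq]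

theorem huygens_circular_refined (x : ℝ) (hx0 : 0 < x) (hx1 : x < π / 2) :
    2 * (Real.sin x) / x + (Real.tan x) / x > 2 * x / (Real.sin x) + x / (Real.tan x) ∧
    2 * x / (Real.sin x) + x / (Real.tan x) > 3 := by
  have hpi : π < 3.15 := by linarith [Real.pi_lt_d2]
  have hx2 : x < 1.58 := by linarith
  have hs : 0 < Real.sin x := Real.sin_pos_of_pos_of_lt_pi hx0 (by linarith [Real.pi_pos])
  have hc : 0 < Real.cos x := Real.cos_pos_of_mem_Ioo ⟨by linarith [Real.pi_pos], hx1⟩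
  have hsl := sin_ge hx0.le
  have hsu := sin_le' hx0.le
  have hcl := cos_ge' hx0.le
  have hcu := cos_le' hx0.le
  have htan : Real.tan x = Real.sin x / Real.cos x := Real.tan_eq_sin_div_cos x
  have hR : 2 * x / (Real.sin x) + x / (Real.tan x) = x * (2 + Real.cos x) / Real.sin x := by
    rw [htan]; field_simp
  have hL : 2 * (Real.sin x) / x + (Real.tan x) / x
      = Real.sin x * (2 * Real.cos x + 1) / (Real.cos x * x) := by
    rw [htan]; field_simp
  constructor
  · clear hx1 hpi htan
    have hS : 0 < x - x^3/6 := by nlinarith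
    have hs2 : (x - x^3/6)^2 ≤ Real.sin x ^ 2 := by nlinarith
    have hCm : 0 ≤ 2*(1 - x^2/2 + x^4/24 - x^6/720) + 1 := by nlinarith
    have hstep1 : (x - x^3/6)^2 * (2*(1 - x^2/2 + x^4/24 - x^6/720) + 1)
        ≤ Real.sin x ^ 2 * (2 * Real.cos x + 1) := by
      nlinarith [mul_nonneg (sq_nonneg (Real.sin x))
        (by linarith : (0:ℝ) ≤ Real.cos x - (1 - x^2/2 + x^4/24 - x^6/720)),
        mul_nonneg hCm (by linarith : (0:ℝ) ≤ Real.sin x ^ 2 - (x - x^3/6)^2)]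
    have hstep2 : x^2 * (Real.cos x * (2 + Real.cos x))
        ≤ x^2 * ((1 - x^2/2 + x^4/24) * (2 + (1 - x^2/2 + x^4/24))) := by
      have h1 : Real.cos x * (2 + Real.cos x)
          ≤ (1 - x^2/2 + x^4/24) * (2 + (1 - x^2/2 + x^4/24)) := by nlinarith
      nlinarith [sq_nonneg x]
    have key : x^2 * (Real.cos x * (2 + Real.cos x)) < Real.sin x ^ 2 * (2 * Real.cos x + 1) := by
      have := poly_q hx0 hx2
      linarith
    rw [hL, hR, gt_iff_lt, div_lt_div_iff₀ hs (mul_pos hc hx0)]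
    clear hsl hsu hcl hcu hs2 hstep1 hstep2 hS hCm hL hR
    nlinarith [key]
  · rw [hR, gt_iff_lt, lt_div_iff₀ hs]
    clear hL hR htan hx1 hpi hc hsl hcu
    have h12 : (0:ℝ) < 12 - x^2 := by nlinarith
    nlinarith [mul_pos (pow_pos hx0 5) h12]
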